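/- There exists a finite colouring Φ of the set ℕ^(2) = {(a,b) ∈ ℕ × ℕ : a < b} (i.e. a function Φ : ℕ^(2) → Fin r for some r ∈ ℕ) such that there do not exist two strictly increasing sequences of natural numbers (a_n)_{n≥1} and (b_n)_{n≥1} with a_i < b_i for every i for which the set {(a_n + a_m, b_n + b_m) : n < m} ∪ {(a_n, b_m) : n < m} is monochromatic under Φ. -/

import Mathlib

/-- The colouring: encodes whether `v₂(y) < x`, the parity of `v₂(y)`, and the odd part
of `y` modulo `4`, packed into `Fin 16`. -/
def myColouring : ℕ × ℕ → Fin 16 := fun p =>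
  ⟨(if padicValNat 2 p.2 < p.1 then 1 else 0) + 2 * (padicValNat 2 p.2 % 2)
      + 4 * ((p.2 / 2 ^ padicValNat 2 p.2) % 4), by split <;> omega⟩

lemma myColouring_eq {x₁ y₁ x₂ y₂ : ℕ} (h : myColouring (x₁, y₁) = myColouring (x₂, y₂)) :
    ((padicValNat 2 y₁ < x₁) ↔ (padicValNat 2 y₂ < x₂)) ∧
      padicValNat 2 y₁ % 2 = padicValNat 2 y₂ % 2 ∧
      (y₁ / 2 ^ padicValNat 2 y₁) % 4 = (y₂ / 2 ^ padicValNat 2 y₂) % 4 := by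
  have h' : (if padicValNat 2 y₁ < x₁ then 1 else 0) + 2 * (padicValNat 2 y₁ % 2)
      + 4 * ((y₁ / 2 ^ padicValNat 2 y₁) % 4)
      = (if padicValNat 2 y₂ < x₂ then 1 else 0) + 2 * (padicValNat 2 y₂ % 2)
      + 4 * ((y₂ / 2 ^ padicValNat 2 y₂) % 4) := congrArg Fin.val h
  by_cases h₁ : padicValNat 2 y₁ < x₁ <;> by_cases h₂ : padicValNat 2 y₂ < x₂ <;>
    simp only [h₁, h₂, if_true, if_false] at h'
  · exact ⟨iff_of_true h₁ h₂, by omega, by omega⟩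
  · exact absurd h' (by omega)
  · exact absurd h' (by omega)
  · exact ⟨iff_of_false h₁ h₂, by omega, by omega⟩

theorem stmt_0 :
    ∃ (r : ℕ) (Φ : ℕ × ℕ → Fin r),
      ¬ ∃ (a b : ℕ → ℕ) (c : Fin r),
        StrictMono a ∧ StrictMono b ∧ (∀ i, 0 < a i) ∧ (∀ i, a i < b i) ∧
        (∀ n m, n < m →
          Φ (a n + a m, b n + b m) = c ∧ Φ (a n, b m) = c) := by
  classical
  refine ⟨16, myColouring, ?_⟩
  rintro ⟨a, b, c, ha, hb, hpos, hab, H⟩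
  have cross : ∀ m, 0 < m → myColouring (a 0, b m) = c := fun m hm => (H 0 m hm).2
  have sum2 : ∀ n m, n < m → myColouring (a n + a m, b n + b m) = c :=
    fun n m h => (H n m h).1
  by_cases hE : padicValNat 2 (b 1) < a 0
  · -- the bit `[v₂(y) < x]` of the colour is 1
    -- so all `v₂ (b m)` are bounded by `a 0`; pigeonhole two equal valuations
    have hEm : ∀ m, 0 < m → padicValNat 2 (b m) < a 0 := by
      intro m hm
      exact (myColouring_eq ((cross m hm).trans (cross 1 one_pos).symm)).1.mpr hE
    have key : ∀ i j, 0 < i → i < j →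
        padicValNat 2 (b i) = padicValNat 2 (b j) → False := by
      intro i j hi hij huv
      have hj : 0 < j := hi.trans hij
      have hbi : b i ≠ 0 := by have h1 := hpos i; have h2 := hab i; omega
      have hbj : b j ≠ 0 := by have h1 := hpos j; have h2 := hab j; omega
      set u := padicValNat 2 (b i) with hu
      obtain ⟨o₁, ho₁⟩ : (2 : ℕ) ^ u ∣ b i := pow_padicValNat_dvd
      obtain ⟨o₂, ho₂⟩ : (2 : ℕ) ^ u ∣ b j := by rw [huv]; exact pow_padicValNat_dvd
      have hpow : (0 : ℕ) < 2 ^ u := Nat.pow_pos (by norm_num)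
      -- odd parts
      have hodd₁ : o₁ % 2 = 1 := by
        rcases Nat.even_or_odd o₁ with he | ho
        · exfalso
          obtain ⟨k, hk⟩ := he
          apply pow_succ_padicValNat_not_dvd (p := 2) hbi
          refine ⟨k, ?_⟩
          rw [← hu, ho₁, hk, pow_succ]; ring
        · exact Nat.odd_iff.mp ho
      have hodd₂ : o₂ % 2 = 1 := by
        rcases Nat.even_or_odd o₂ with he | ho
        · exfalso
          obtain ⟨k, hk⟩ := he
          apply pow_succ_padicValNat_not_dvd (p := 2) hbj
          refine ⟨k, ?_⟩
          rw [← huv, ho₂, hk, pow_succ]; ring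
        · exact Nat.odd_iff.mp ho
      -- odd parts agree mod 4
      have hW : (b i / 2 ^ padicValNat 2 (b i)) % 4 = (b j / 2 ^ padicValNat 2 (b j)) % 4 :=
        (myColouring_eq ((cross i hi).trans (cross j hj).symm)).2.2
      rw [← hu, ← huv] at hW
      have hdiv₁ : b i / 2 ^ u = o₁ := by rw [ho₁, Nat.mul_div_cancel_left _ hpow]
      have hdiv₂ : b j / 2 ^ u = o₂ := by rw [ho₂, Nat.mul_div_cancel_left _ hpow]
      rw [hdiv₁, hdiv₂] at hW
      -- the sum has valuation exactly u + 1
      obtain ⟨q, hq⟩ : ∃ q, o₁ + o₂ = 2 * q := ⟨(o₁ + o₂) / 2, by omega⟩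
      have hsum : b i + b j = 2 ^ (u + 1) * q := by
        rw [ho₁, ho₂, ← Nat.mul_add, hq, pow_succ]; ring
      have hqodd : q % 2 = 1 := by omega
      have hv : padicValNat 2 (b i + b j) = u + 1 := by
        rw [hsum, padicValNat.mul (by positivity) (by omega),
          padicValNat.prime_pow, padicValNat.eq_zero_of_not_dvd (by omega)]
      -- but the parity of the valuation must be constant
      have hP : padicValNat 2 (b i + b j) % 2 = padicValNat 2 (b i) % 2 :=
        (myColouring_eq ((sum2 i j hij).trans (cross i hi).symm)).2.1
      rw [hv, ← hu] at hP
      omega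
    have hmap : ∀ m ∈ Finset.Icc 1 (a 0 + 1),
        padicValNat 2 (b m) ∈ Finset.range (a 0) := by
      intro m hm
      rw [Finset.mem_Icc] at hm
      exact Finset.mem_range.mpr (hEm m (by omega))
    obtain ⟨m₁, hm₁, m₂, hm₂, hne, heq⟩ :=
      Finset.exists_ne_map_eq_of_card_lt_of_maps_to
        (by rw [Nat.card_Icc, Finset.card_range]; omega) hmap
    rw [Finset.mem_Icc] at hm₁ hm₂
    rcases hne.lt_or_gt with hlt | hlt
    · exact key m₁ m₂ (by omega) hlt heq
    · exact key m₂ m₁ (by omega) hlt heq.symm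
  · -- the bit `[v₂(y) < x]` of the colour is 0 : huge powers of two divide the sums
    have hEm : ∀ n m, n < m → a n + a m ≤ padicValNat 2 (b n + b m) := by
      intro n m h
      by_contra hc
      exact hE ((myColouring_eq ((sum2 n m h).trans (cross 1 one_pos).symm)).1.mp
        (by omega))
    set Δ := b 1 - b 0 with hΔdef
    have hΔpos : 0 < Δ := by have := hb (show (0:ℕ) < 1 by norm_num); omega
    set m := Δ + 2 with hm
    have h0m : (0 : ℕ) < m := by omega
    have h1m : (1 : ℕ) < m := by omega
    have d0 : (2 : ℕ) ^ a m ∣ b 0 + b m := by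
      refine dvd_trans (pow_dvd_pow 2 ?_) pow_padicValNat_dvd
      have := hEm 0 m h0m; omega
    have d1 : (2 : ℕ) ^ a m ∣ b 1 + b m := by
      refine dvd_trans (pow_dvd_pow 2 ?_) pow_padicValNat_dvd
      have := hEm 1 m h1m; omega
    have dΔ : (2 : ℕ) ^ a m ∣ Δ := by
      have := Nat.dvd_sub d1 d0
      rwa [Nat.add_sub_add_right] at this
    have hle : (2 : ℕ) ^ a m ≤ Δ := Nat.le_of_dvd hΔpos dΔ
    have hgt : Δ < 2 ^ a m := by
      calc Δ < 2 ^ Δ := Nat.lt_two_pow_self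
      _ ≤ 2 ^ a m := Nat.pow_le_pow_right (by norm_num)
          (le_trans (by omega) (ha.le_apply (x := m)))
    omega
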